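/- Let a ≠ 0 and W(x) = e^{-x²}[[1+a²x⁴, ax²],[ax²,1]]. The second-order differential operator D₁ = ∂² I + ∂[[-2x, 4ax],[0,-2x]] + [[0,2a],[0,4]] satisfies the three symmetry equations: F₂W = W F₂*, 2(F₂W)' - F₁W = W F₁*, and (F₂W)'' - (F₁W)' + F₀W = W F₀*, where F₂ = I, F₁(x) = [[-2x,4ax],[0,-2x]], F₀ = [[0,2a],[0,4]]. -/

import Mathlib

open Matrix Real

/-- Entrywise derivative of a matrix-valued function of a real variable. -/
noncomputable def md (P : ℝ → Matrix (Fin 2) (Fin 2) ℝ) : ℝ → Matrix (Fin 2) (Fin 2) ℝ :=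
  fun x => Matrix.of fun i j => deriv (fun t => P t i j) x

/-- The Hermite-type weight `W(x) = e^{-x²}[[1+a²x⁴, ax²],[ax²,1]]`. -/
noncomputable def herW (a : ℝ) (x : ℝ) : Matrix (Fin 2) (Fin 2) ℝ :=
  (Real.exp (-x ^ 2)) • !![1 + a^2 * x^4, a * x^2; a * x^2, 1]

private lemma dpoly (c0 c1 c2 c3 c4 c5 : ℝ) (x : ℝ) :
    HasDerivAt (fun t => Real.exp (-t^2) * (c0 + c1*t + c2*t^2 + c3*t^3 + c4*t^4 + c5*t^5))
      (Real.exp (-x^2) * ((c1 + 2*c2*x + 3*c3*x^2 + 4*c4*x^3 + 5*c5*x^4)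
        - 2*x*(c0 + c1*x + c2*x^2 + c3*x^3 + c4*x^4 + c5*x^5))) x := by
  have hexp : HasDerivAt (fun t : ℝ => Real.exp (-t^2)) (Real.exp (-x^2) * (-(2*x))) x := by
    have h1 : HasDerivAt (fun t : ℝ => -t^2) (-(2*x)) x := by
      simpa using (hasDerivAt_pow 2 x).fun_neg
    exact (Real.hasDerivAt_exp (-x^2)).comp x h1
  have hp : HasDerivAt (fun t : ℝ => c0 + c1*t + c2*t^2 + c3*t^3 + c4*t^4 + c5*t^5)
      (c1 + 2*c2*x + 3*c3*x^2 + 4*c4*x^3 + 5*c5*x^4) x := by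
    have := ((((((hasDerivAt_const x c0).fun_add ((hasDerivAt_id x).const_mul c1)).fun_add
      ((hasDerivAt_pow 2 x).const_mul c2)).fun_add ((hasDerivAt_pow 3 x).const_mul c3)).fun_add
      ((hasDerivAt_pow 4 x).const_mul c4)).fun_add ((hasDerivAt_pow 5 x).const_mul c5))
    exact this.congr_deriv (by ring)
  have := hexp.fun_mul hp
  exact this.congr_deriv (by ring)

private lemma dcalc (f : ℝ → ℝ) (c0 c1 c2 c3 c4 c5 x : ℝ)
    (hf : f = fun t => Real.exp (-t^2) * (c0 + c1*t + c2*t^2 + c3*t^3 + c4*t^4 + c5*t^5)) :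
    deriv f x = Real.exp (-x^2) * ((c1 + 2*c2*x + 3*c3*x^2 + 4*c4*x^3 + 5*c5*x^4)
        - 2*x*(c0 + c1*x + c2*x^2 + c3*x^3 + c4*x^4 + c5*x^5)) := by
  rw [hf]; exact (dpoly c0 c1 c2 c3 c4 c5 x).deriv

private lemma mdW (a : ℝ) : md (fun t => (1 : Matrix (Fin 2) (Fin 2) ℝ) * herW a t) =
    fun x => Real.exp (-x^2) •
      !![-2*x + 4*a^2*x^3 - 2*a^2*x^5, 2*a*x - 2*a*x^3;
         2*a*x - 2*a*x^3, -2*x] := by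
  funext x
  ext i j
  fin_cases i <;> fin_cases j <;>
    simp only [md, herW, Matrix.one_mul, of_apply, Matrix.smul_apply, smul_eq_mul,
      cons_val', cons_val_zero, cons_val_one, head_cons, head_fin_const, empty_val',
      cons_val_fin_one, Fin.zero_eta, Fin.mk_one]
  · rw [dcalc _ 1 0 0 0 (a^2) 0 x (by funext t; ring)]; ring
  · rw [dcalc _ 0 0 a 0 0 0 x (by funext t; ring)]; ring
  · rw [dcalc _ 0 0 a 0 0 0 x (by funext t; ring)]; ring
  · rw [dcalc _ 1 0 0 0 0 0 x (by funext t; ring)]; ring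

private lemma mdmdW (a : ℝ) (x : ℝ) :
    md (md (fun t => (1 : Matrix (Fin 2) (Fin 2) ℝ) * herW a t)) x =
    Real.exp (-x^2) •
      !![-2 + 4*x^2 + 12*a^2*x^2 - 18*a^2*x^4 + 4*a^2*x^6, 2*a - 10*a*x^2 + 4*a*x^4;
         2*a - 10*a*x^2 + 4*a*x^4, -2 + 4*x^2] := by
  rw [mdW]
  ext i j
  fin_cases i <;> fin_cases j <;>
    simp only [md, of_apply, Matrix.smul_apply, smul_eq_mul,
      cons_val', cons_val_zero, cons_val_one, head_cons, head_fin_const, empty_val',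
      cons_val_fin_one, Fin.zero_eta, Fin.mk_one]
  · rw [dcalc _ 0 (-2) 0 (4*a^2) 0 (-2*a^2) x (by funext t; ring)]; ring
  · rw [dcalc _ 0 (2*a) 0 (-2*a) 0 0 x (by funext t; ring)]; ring
  · rw [dcalc _ 0 (2*a) 0 (-2*a) 0 0 x (by funext t; ring)]; ring
  · rw [dcalc _ 0 (-2) 0 0 0 0 x (by funext t; ring)]; ring

private lemma mdF1W (a : ℝ) (x : ℝ) :
    md (fun t => !![-2 * t, 4 * a * t; 0, -2 * t] * herW a t) x =
    Real.exp (-x^2) •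
      !![-2 + 4*x^2 + 12*a^2*x^2 - 18*a^2*x^4 + 4*a^2*x^6, 4*a - 14*a*x^2 + 4*a*x^4;
         -6*a*x^2 + 4*a*x^4, -2 + 4*x^2] := by
  ext i j
  fin_cases i <;> fin_cases j <;>
    simp only [md, herW, of_apply, Matrix.smul_apply, smul_eq_mul, Matrix.mul_apply,
      Fin.sum_univ_two, cons_val', cons_val_zero, cons_val_one, head_cons, head_fin_const,
      empty_val', cons_val_fin_one, Fin.zero_eta, Fin.mk_one]
  · rw [dcalc _ 0 (-2) 0 (4*a^2) 0 (-2*a^2) x (by funext t; ring)]; ring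
  · rw [dcalc _ 0 (4*a) 0 (-2*a) 0 0 x (by funext t; ring)]; ring
  · rw [dcalc _ 0 0 0 (-2*a) 0 0 x (by funext t; ring)]; ring
  · rw [dcalc _ 0 (-2) 0 0 0 0 x (by funext t; ring)]; ring

/-- The coefficients `F₂ = I`, `F₁ = [[-2x,4ax],[0,-2x]]`, `F₀ = [[0,2a],[0,4]]` of
`D₁` satisfy the three symmetry equations with respect to `W`. -/
theorem stmt11 (a : ℝ) (ha : a ≠ 0) (x : ℝ) :
    (1 : Matrix (Fin 2) (Fin 2) ℝ) * herW a x =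
      herW a x * (1 : Matrix (Fin 2) (Fin 2) ℝ)ᵀ ∧
    (2 : ℝ) • md (fun t => (1 : Matrix (Fin 2) (Fin 2) ℝ) * herW a t) x -
        !![-2 * x, 4 * a * x; 0, -2 * x] * herW a x =
      herW a x * (!![-2 * x, 4 * a * x; 0, -2 * x] : Matrix (Fin 2) (Fin 2) ℝ)ᵀ ∧
    md (md (fun t => (1 : Matrix (Fin 2) (Fin 2) ℝ) * herW a t)) x -
        md (fun t => !![-2 * t, 4 * a * t; 0, -2 * t] * herW a t) x +
        !![0, 2 * a; 0, 4] * herW a x =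
      herW a x * (!![0, 2 * a; 0, 4] : Matrix (Fin 2) (Fin 2) ℝ)ᵀ := by
  refine ⟨by rw [Matrix.transpose_one, Matrix.one_mul, Matrix.mul_one], ?_, ?_⟩
  · rw [mdW]
    ext i j
    fin_cases i <;> fin_cases j <;>
      simp [herW, Matrix.mul_apply, Matrix.transpose_apply, Matrix.vecHead, Fin.sum_univ_two] <;> ring
  · rw [mdmdW, mdF1W]
    ext i j
    fin_cases i <;> fin_cases j <;>
      simp [herW, Matrix.mul_apply, Matrix.transpose_apply, Matrix.vecHead, Fin.sum_univ_two] <;> ring
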